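/- Let A, B be bounded self-adjoint operators on a Hilbert space with A ≥ λI and B ≥ λI for some λ > 0 (hence both invertible with bounded inverse). If ‖A·B^{-1}‖ ≤ Ξ, then ‖A^{1/2}·B^{-1/2}‖ ≤ Ξ^{1/2}. -/

import Mathlib

open scoped InnerProductSpace

lemma my_spectralRadius_mul_comm {A : Type*} [NormedRing A] [NormedAlgebra ℂ A] (a b : A) :
    spectralRadius ℂ (a * b) = spectralRadius ℂ (b * a) := by
  have key : ∀ x y : A, spectralRadius ℂ (x * y) ≤ spectralRadius ℂ (y * x) := by
    intro x y
    rw [spectralRadius, spectralRadius]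
    refine iSup₂_le fun k hk => ?_
    rcases eq_or_ne k 0 with rfl | hk0
    · simp
    · have hk' : k ∈ spectrum ℂ (y * x) := by
        have h := spectrum.nonzero_mul_comm (𝕜 := ℂ) x y
        have h2 : k ∈ spectrum ℂ (x * y) \ {0} := ⟨hk, hk0⟩
        rw [h] at h2
        exact h2.1
      exact le_iSup₂ (f := fun k (_ : k ∈ spectrum ℂ (y * x)) => (‖k‖₊ : ENNReal)) k hk'
  exact le_antisymm (key a b) (key b a)

lemma my_spectrum_subset_Ici {H : Type*} [NormedAddCommGroup H]
    [InnerProductSpace ℂ H] [CompleteSpace H]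
    (A : H →L[ℂ] H) (lam : ℝ) (hlam : 0 < lam)
    (hAlow : ∀ v : H, lam * ‖v‖ ^ 2 ≤ (⟪A v, v⟫_ℂ).re) :
    spectrum ℝ A ⊆ Set.Ici lam := by
  intro μ hμ
  by_contra hcon
  rw [Set.mem_Ici, not_le] at hcon
  have hunit : IsUnit (algebraMap ℝ (H →L[ℂ] H) μ - A) := by
    refine ContinuousLinearMap.isUnit_of_forall_le_norm_inner_map _
      (c := ⟨lam - μ, by linarith⟩) (by exact_mod_cast sub_pos.mpr hcon) fun x => ?_
    have h2 : ((⟪(algebraMap ℝ (H →L[ℂ] H) μ - A) x, x⟫_ℂ)).re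
        = μ * ‖x‖ ^ 2 - (⟪A x, x⟫_ℂ).re := by
      simp only [ContinuousLinearMap.sub_apply, inner_sub_left, Algebra.algebraMap_eq_smul_one,
        ContinuousLinearMap.smul_apply, ContinuousLinearMap.one_apply]
      rw [RCLike.real_smul_eq_coe_smul (K := ℂ), inner_smul_real_left,
        inner_self_eq_norm_sq_to_K]
      simp [Complex.sub_re, Complex.smul_re, ← Complex.ofReal_pow]
    calc ‖x‖ ^ 2 * ((⟨lam - μ, by linarith⟩ : NNReal) : ℝ)
        = (lam - μ) * ‖x‖ ^ 2 := by push_cast; ring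
      _ ≤ (⟪A x, x⟫_ℂ).re - μ * ‖x‖ ^ 2 := by have := hAlow x; linarith
      _ = -(((⟪(algebraMap ℝ (H →L[ℂ] H) μ - A) x, x⟫_ℂ)).re) := by rw [h2]; ring
      _ ≤ |(((⟪(algebraMap ℝ (H →L[ℂ] H) μ - A) x, x⟫_ℂ)).re)| := neg_le_abs _
      _ ≤ ‖⟪(algebraMap ℝ (H →L[ℂ] H) μ - A) x, x⟫_ℂ‖ :=
          (Complex.abs_re_le_norm _)
  exact spectrum.mem_iff.mp hμ hunit

/-- A consequence of the Cordes inequality: if `A, B ≥ λI` are self-adjoint with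
`‖A·B⁻¹‖ ≤ Ξ`, then `‖A^{1/2}·B^{-1/2}‖ ≤ Ξ^{1/2}`. -/
theorem cordes_half_power {H : Type*} [NormedAddCommGroup H]
    [InnerProductSpace ℂ H] [CompleteSpace H]
    (A B : H →L[ℂ] H) (hA : IsSelfAdjoint A) (hB : IsSelfAdjoint B)
    (lam : ℝ) (hlam : 0 < lam)
    (hAlow : ∀ v : H, lam * ‖v‖ ^ 2 ≤ (⟪A v, v⟫_ℂ).re)
    (hBlow : ∀ v : H, lam * ‖v‖ ^ 2 ≤ (⟪B v, v⟫_ℂ).re)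
    (Ξ : ℝ)
    (hΞ : ‖A ∘L cfc (fun t : ℝ => t⁻¹) B‖ ≤ Ξ) :
    ‖cfc (fun t : ℝ => Real.sqrt t) A ∘L cfc (fun t : ℝ => (Real.sqrt t)⁻¹) B‖ ≤
      Real.sqrt Ξ := by
  rcases subsingleton_or_nontrivial H with hsub | hnt
  · have : Subsingleton (H →L[ℂ] H) := ⟨fun f g => ContinuousLinearMap.ext fun x => Subsingleton.elim _ _⟩
    rw [Subsingleton.elim (cfc (fun t : ℝ => Real.sqrt t) A ∘L cfc (fun t : ℝ => (Real.sqrt t)⁻¹) B) 0, norm_zero]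
    exact Real.sqrt_nonneg _
  have hAspec := my_spectrum_subset_Ici A lam hlam hAlow
  have hBspec := my_spectrum_subset_Ici B lam hlam hBlow
  set S := cfc (fun t : ℝ => Real.sqrt t) A with hS
  set R := cfc (fun t : ℝ => (Real.sqrt t)⁻¹) B with hR
  set Bi := cfc (fun t : ℝ => t⁻¹) B with hBi
  -- continuity facts
  have hA0 : ∀ t ∈ spectrum ℝ A, (0:ℝ) < t := fun t ht => hlam.trans_le (hAspec ht)
  have hB0 : ∀ t ∈ spectrum ℝ B, (0:ℝ) < t := fun t ht => hlam.trans_le (hBspec ht)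
  have hcS : ContinuousOn (fun t : ℝ => Real.sqrt t) (spectrum ℝ A) :=
    Real.continuous_sqrt.continuousOn
  have hcR : ContinuousOn (fun t : ℝ => (Real.sqrt t)⁻¹) (spectrum ℝ B) :=
    Real.continuous_sqrt.continuousOn.inv₀ fun t ht =>
      (Real.sqrt_pos.mpr (hB0 t ht)).ne'
  -- S * S = A
  have hSS : S * S = A := by
    rw [hS, ← cfc_mul _ _ A hcS hcS]
    rw [cfc_congr (g := fun t : ℝ => t) fun t ht => Real.mul_self_sqrt (hA0 t ht).le]
    exact cfc_id' ℝ A hA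
  -- R * R = Bi
  have hRR : R * R = Bi := by
    rw [hR, hBi, ← cfc_mul _ _ B hcR hcR]
    refine cfc_congr fun t ht => ?_
    rw [← mul_inv, Real.mul_self_sqrt (hB0 t ht).le]
  have hSsa : IsSelfAdjoint S := cfc_predicate _ A
  have hRsa : IsSelfAdjoint R := cfc_predicate _ B
  have hRAR : IsSelfAdjoint (R * A * R) := by
    rw [IsSelfAdjoint, star_mul, star_mul, hRsa.star_eq, hA.star_eq, mul_assoc]
  -- norm computation
  have hΞ0 : 0 ≤ Ξ := le_trans (norm_nonneg _) hΞ
  have hmul : (S ∘L R) = S * R := rfl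
  have hABi : (A ∘L Bi) = A * Bi := rfl
  rw [hmul]
  refine Real.le_sqrt_of_sq_le ?_
  have hsq : ‖S * R‖ ^ 2 = ‖R * A * R‖ := by
    have := CStarRing.norm_star_mul_self (x := S * R)
    rw [star_mul, hSsa.star_eq, hRsa.star_eq] at this
    rw [sq, ← this]
    congr 1
    rw [mul_assoc, ← mul_assoc S S R, hSS, ← mul_assoc]
  rw [hsq]
  have hrad : (‖R * A * R‖₊ : ENNReal) ≤ (‖A * Bi‖₊ : ENNReal) := by
    calc (‖R * A * R‖₊ : ENNReal) = spectralRadius ℂ (R * A * R) :=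
          hRAR.spectralRadius_eq_nnnorm.symm
      _ = spectralRadius ℂ ((R * A) * R) := by rw [mul_assoc]
      _ = spectralRadius ℂ (R * (R * A)) := my_spectralRadius_mul_comm _ _
      _ = spectralRadius ℂ ((R * R) * A) := by rw [mul_assoc]
      _ = spectralRadius ℂ (A * (R * R)) := my_spectralRadius_mul_comm _ _
      _ = spectralRadius ℂ (A * Bi) := by rw [hRR]
      _ ≤ (‖A * Bi‖₊ : ENNReal) := spectrum.spectralRadius_le_nnnorm _
  have hnorm : ‖R * A * R‖ ≤ ‖A * Bi‖ := by
    have := (ENNReal.coe_le_coe.mp hrad)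
    exact_mod_cast this
  calc ‖R * A * R‖ ≤ ‖A * Bi‖ := hnorm
    _ ≤ Ξ := by rw [← hABi]; exact hΞ
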